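/- Let m ≥ 1 and a_1, …, a_{2m} ∈ ℝ. Then max over all sign vectors ξ ∈ {−1, 1}^{2m} with Σ_{k} ξ_k = 0 of Σ_{k=1}^{2m} ξ_k a_k equals min over η ∈ ℝ of Σ_{k=1}^{2m} |a_k − η|. In particular: (i) for every balanced sign vector ξ and every η ∈ ℝ, Σ ξ_k a_k ≤ Σ |a_k − η|; and (ii) there exist a balanced sign vector ξ and η ∈ ℝ achieving equality. -/
import Mathlib


/-- Extremal identity for balanced signs: the maximum of `Σ ξ_k a_k` over sign vectors
`ξ ∈ {−1,1}^{2m}` with `Σ ξ_k = 0` equals the minimum over `η ∈ ℝ` of `Σ |a_k − η|`: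
(i) every balanced sign vector and every `η` satisfy the inequality, and
(ii) some balanced sign vector and some `η` achieve equality. -/
theorem balanced_signs_extremal_identity (m : ℕ) (hm : 1 ≤ m)
    (a : Fin (2 * m) → ℝ) :
    (∀ ξ : Fin (2 * m) → ℝ, (∀ k, ξ k = 1 ∨ ξ k = -1) → (∑ k, ξ k = 0) →
      ∀ η : ℝ, ∑ k, ξ k * a k ≤ ∑ k, |a k - η|)
    ∧ (∃ ξ : Fin (2 * m) → ℝ, (∀ k, ξ k = 1 ∨ ξ k = -1) ∧ (∑ k, ξ k = 0) ∧
        ∃ η : ℝ, ∑ k, ξ k * a k = ∑ k, |a k - η|) := by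
  constructor
  · intro ξ hξ hsum η
    have h1 : ∑ k, ξ k * a k = ∑ k, ξ k * (a k - η) := by
      simp [mul_sub, Finset.sum_sub_distrib, ← Finset.sum_mul, hsum]
    rw [h1]
    refine Finset.sum_le_sum fun k _ => ?_
    rcases hξ k with h | h
    · rw [h, one_mul]; exact le_abs_self _
    · rw [h, neg_one_mul]; exact neg_le_abs _
  · have hmn : m < 2 * m := by omega
    set σ := Tuple.sort a with hσ
    have hmono : Monotone (a ∘ σ) := Tuple.monotone_sort a
    set η := a (σ ⟨m, hmn⟩) with hη
    set ξ : Fin (2 * m) → ℝ :=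
      fun k => if m ≤ ((σ.symm k : Fin (2 * m)) : ℕ) then 1 else -1 with hξdef
    have hbal : ∑ k, ξ k = 0 := by
      rw [← Equiv.sum_comp σ ξ]
      simp only [hξdef, Equiv.symm_apply_apply]
      rw [Fin.sum_univ_eq_sum_range (fun i => if m ≤ i then (1 : ℝ) else -1)]
      rw [Finset.range_eq_Ico, ← Finset.sum_Ico_consecutive _ (Nat.zero_le m) (le_of_lt hmn)]
      rw [Finset.sum_congr rfl (fun i hi => if_neg (by simp at hi; omega)),
        Finset.sum_congr rfl (g := fun _ => (1:ℝ)) (fun i hi => if_pos (by simp at hi; omega))]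
      have h2 : 2 * m - m = m := by omega
      simp [Nat.Ico_zero_eq_range, h2]
    refine ⟨ξ, fun k => by rw [hξdef]; dsimp only; split <;> simp, hbal, η, ?_⟩
    have h1 : ∑ k, ξ k * a k = ∑ k, ξ k * (a k - η) := by
      simp [mul_sub, Finset.sum_sub_distrib, ← Finset.sum_mul, hbal]
    rw [h1, ← Equiv.sum_comp σ (fun k => ξ k * (a k - η)),
      ← Equiv.sum_comp σ (fun k => |a k - η|)]
    refine Finset.sum_congr rfl fun i _ => ?_
    simp only [hξdef, Equiv.symm_apply_apply]
    by_cases h : m ≤ (i : ℕ)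
    · rw [if_pos h, one_mul]
      have hle : η ≤ a (σ i) := hmono (show (⟨m, hmn⟩ : Fin (2 * m)) ≤ i from h)
      rw [abs_of_nonneg (by linarith)]
    · rw [if_neg h, neg_one_mul]
      have hle : a (σ i) ≤ η := hmono (show i ≤ (⟨m, hmn⟩ : Fin (2 * m)) from le_of_lt (by
        change (i : ℕ) < m; omega))
      rw [abs_of_nonpos (by linarith)]
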